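/- Let (Ω, 𝓕, P) be a probability space, Q ∈ ℕ, and let (ξ_{i,q})_{i∈ℤ, 0≤q≤Q} be real-valued square-integrable random variables that are pairwise uncorrelated, each with mean 0 and variance 1. Let m : {0,…,Q} → ℝ and define for each k ∈ ℤ the random variable X_k := ∑_{q=0}^{Q} m_q · ∑_{j=0}^{q} C(q,j)·ξ_{k+j, q}. Then for all k ∈ ℤ and all natural numbers n, E[X_k · X_{k+n}] = ∑_{q=n}^{Q} m_q² · C(2q, q−n); in particular the covariance vanishes unless some q ≥ n. -/

import Mathlib

open MeasureTheory

open Finset in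
private lemma vandN_stmt6 (n q : ℕ) (h : n ≤ q) :
    ∑ j ∈ range (q - n + 1), q.choose (n + j) * q.choose j = (2*q).choose (q - n) := by
  rw [two_mul, Nat.add_choose_eq, Finset.Nat.sum_antidiagonal_eq_sum_range_succ_mk]
  refine Finset.sum_congr rfl fun i hi => ?_
  rw [Finset.mem_range] at hi
  have h1 : n + i ≤ q := by omega
  have h2 : q - n - i = q - (n + i) := by omega
  rw [h2, Nat.choose_symm h1, mul_comm]

/-- Covariance of the light-cone network increments: if `ξ_{i,q}` (for `i ∈ ℤ`, `0 ≤ q ≤ Q`)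
are square-integrable, pairwise uncorrelated, with mean `0` and variance `1`, and
`X_k := ∑_{q=0}^{Q} m_q ∑_{j=0}^{q} C(q,j)·ξ_{k+j,q}`, then
`E[X_k X_{k+n}] = ∑_{q=n}^{Q} m_q²·C(2q, q−n)`. -/
theorem stmt_6 {Ω : Type*} [MeasurableSpace Ω] (P : Measure Ω) [IsProbabilityMeasure P]
    (Q : ℕ) (ξ : ℤ → ℕ → Ω → ℝ)
    (hL2 : ∀ (i : ℤ) (q : ℕ), q ≤ Q → MemLp (ξ i q) 2 P)
    (hmean : ∀ (i : ℤ) (q : ℕ), q ≤ Q → ∫ ω, ξ i q ω ∂P = 0)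
    (hvar : ∀ (i : ℤ) (q : ℕ), q ≤ Q → ∫ ω, (ξ i q ω)^2 ∂P = 1)
    (huncorr : ∀ (i i' : ℤ) (q q' : ℕ), q ≤ Q → q' ≤ Q → (i, q) ≠ (i', q') →
      ∫ ω, ξ i q ω * ξ i' q' ω ∂P = 0)
    (m : ℕ → ℝ) (X : ℤ → Ω → ℝ)
    (hX : ∀ (k : ℤ) (ω : Ω), X k ω =
      ∑ q ∈ Finset.range (Q+1), m q * ∑ j ∈ Finset.range (q+1),
        (q.choose j : ℝ) * ξ (k + (j : ℤ)) q ω) :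
    ∀ (k : ℤ) (n : ℕ),
      ∫ ω, X k ω * X (k + (n : ℤ)) ω ∂P =
        ∑ q ∈ Finset.Icc n Q, (m q)^2 * ((2*q).choose (q - n) : ℝ) := by
  intro k n
  classical
  -- orthogonality relations
  have orth : ∀ (i i' : ℤ) (q q' : ℕ), q ≤ Q → q' ≤ Q →
      ∫ ω, ξ i q ω * ξ i' q' ω ∂P = if i = i' ∧ q = q' then 1 else 0 := by
    intro i i' q q' hq hq'
    by_cases h : i = i' ∧ q = q'
    · obtain ⟨rfl, rfl⟩ := h
      rw [if_pos ⟨rfl, rfl⟩]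
      simpa [pow_two] using hvar i q hq
    · rw [if_neg h]
      exact huncorr i i' q q' hq hq' (by simpa [Prod.ext_iff] using h)
  -- integrability of products
  have hint : ∀ (i i' : ℤ) (q q' : ℕ), q ≤ Q → q' ≤ Q →
      Integrable (fun ω => ξ i q ω * ξ i' q' ω) P := by
    intro i i' q q' hq hq'
    have h3 : MemLp (ξ i q • ξ i' q') 1 P :=
      (hL2 i' q' hq').smul (hL2 i q hq) (hpqr := ⟨by rw [ENNReal.inv_two_add_inv_two, inv_one]⟩)
    exact memLp_one_iff_integrable.mp h3
  -- rewrite X as a single sum over a sigma finset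
  set A : Finset ((_ : ℕ) × ℕ) :=
    (Finset.range (Q+1)).sigma (fun q => Finset.range (q+1)) with hA
  set c : ((_ : ℕ) × ℕ) → ℝ := fun p => m p.1 * (p.1.choose p.2 : ℝ) with hc
  have memA : ∀ p : (_ : ℕ) × ℕ, p ∈ A ↔ p.1 ≤ Q ∧ p.2 ≤ p.1 := by
    intro p
    simp [hA, Finset.mem_sigma, Finset.mem_range, Nat.lt_succ_iff]
  have hXs : ∀ (k : ℤ) (ω : Ω), X k ω = ∑ p ∈ A, c p * ξ (k + (p.2 : ℤ)) p.1 ω := by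
    intro k ω
    rw [hX, hA, Finset.sum_sigma _ _ (fun p => c p * ξ (k + (p.2 : ℤ)) p.1 ω)]
    exact Finset.sum_congr rfl fun q _ => by
      rw [Finset.mul_sum]
      exact Finset.sum_congr rfl fun j _ => (mul_assoc _ _ _).symm
  -- expand the product
  have expand : ∀ ω : Ω, X k ω * X (k + (n : ℤ)) ω =
      ∑ p ∈ A, ∑ p' ∈ A, (c p * c p') *
        (ξ (k + (p.2 : ℤ)) p.1 ω * ξ (k + (n : ℤ) + (p'.2 : ℤ)) p'.1 ω) := by
    intro ω
    rw [hXs k ω, hXs (k + (n : ℤ)) ω, Finset.sum_mul_sum]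
    exact Finset.sum_congr rfl fun p _ => Finset.sum_congr rfl fun p' _ => by ring
  have key : ∫ ω, X k ω * X (k + (n : ℤ)) ω ∂P =
      ∑ p ∈ A, ∑ p' ∈ A, (c p * c p') *
        (if k + (p.2 : ℤ) = k + (n : ℤ) + (p'.2 : ℤ) ∧ p.1 = p'.1 then (1:ℝ) else 0) := by
    simp_rw [expand]
    rw [integral_finset_sum]
    · refine Finset.sum_congr rfl fun p hp => ?_
      rw [integral_finset_sum]
      · refine Finset.sum_congr rfl fun p' hp' => ?_
        rw [integral_const_mul, orth _ _ _ _ ((memA p).mp hp).1 ((memA p').mp hp').1]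
      · intro p' hp'
        exact ((hint _ _ _ _ ((memA p).mp hp).1 ((memA p').mp hp').1).const_mul _)
    · intro p hp
      exact integrable_finset_sum _ fun p' hp' =>
        ((hint _ _ _ _ ((memA p).mp hp).1 ((memA p').mp hp').1).const_mul _)
  rw [key, Finset.sum_comm]
  -- collapse the inner sum using orthogonality
  have step2 : ∀ p' ∈ A,
      (∑ p ∈ A, (c p * c p') *
        (if k + (p.2 : ℤ) = k + (n : ℤ) + (p'.2 : ℤ) ∧ p.1 = p'.1 then (1:ℝ) else 0)) =
      if n + p'.2 ≤ p'.1 then c ⟨p'.1, n + p'.2⟩ * c p' else 0 := by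
    intro p' hp'
    have hcond : ∀ p : (_ : ℕ) × ℕ,
        (k + (p.2 : ℤ) = k + (n : ℤ) + (p'.2 : ℤ) ∧ p.1 = p'.1) ↔
          p = ⟨p'.1, n + p'.2⟩ := by
      intro p
      constructor
      · rintro ⟨h1, h2⟩
        obtain ⟨a, b⟩ := p
        obtain ⟨a', b'⟩ := p'
        simp only at h1 h2 ⊢
        subst h2
        congr 1
        omega
      · rintro rfl
        exact ⟨by push_cast; ring, rfl⟩
    calc (∑ p ∈ A, (c p * c p') *
          (if k + (p.2 : ℤ) = k + (n : ℤ) + (p'.2 : ℤ) ∧ p.1 = p'.1 then (1:ℝ) else 0))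
        = ∑ p ∈ A, (if p = ⟨p'.1, n + p'.2⟩ then c p * c p' else 0) := by
          refine Finset.sum_congr rfl fun p _ => ?_
          rw [mul_ite, mul_one, mul_zero]
          exact if_congr (hcond p) rfl rfl
      _ = if (⟨p'.1, n + p'.2⟩ : (_ : ℕ) × ℕ) ∈ A then c ⟨p'.1, n + p'.2⟩ * c p' else 0 :=
          Finset.sum_ite_eq' A _ _
      _ = if n + p'.2 ≤ p'.1 then c ⟨p'.1, n + p'.2⟩ * c p' else 0 := by
          congr 1
          rw [memA]
          simp only [eq_iff_iff]
          have := ((memA p').mp hp').1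
          constructor
          · exact fun h => h.2
          · exact fun h => ⟨this, h⟩
  rw [Finset.sum_congr rfl step2, hA,
    Finset.sum_sigma _ _ (fun x => if n + x.2 ≤ x.1 then c ⟨x.1, n + x.2⟩ * c x else 0)]
  -- now a purely combinatorial computation
  have perq : ∀ q ∈ Finset.range (Q+1),
      (∑ j ∈ Finset.range (q+1),
        (if n + j ≤ q then c ⟨q, n + j⟩ * c ⟨q, j⟩ else 0)) =
      if n ≤ q then (m q)^2 * ((2*q).choose (q - n) : ℝ) else 0 := by
    intro q _
    by_cases hnq : n ≤ q
    · rw [if_pos hnq]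
      have hfil : (Finset.range (q+1)).filter (fun j => n + j ≤ q) =
          Finset.range (q - n + 1) := by
        ext j; simp [Finset.mem_filter, Finset.mem_range]; omega
      calc (∑ j ∈ Finset.range (q+1),
            (if n + j ≤ q then c ⟨q, n + j⟩ * c ⟨q, j⟩ else 0))
          = ∑ j ∈ (Finset.range (q+1)).filter (fun j => n + j ≤ q),
              c ⟨q, n + j⟩ * c ⟨q, j⟩ := (Finset.sum_filter _ _).symm
        _ = ∑ j ∈ Finset.range (q - n + 1), c ⟨q, n + j⟩ * c ⟨q, j⟩ := by rw [hfil]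
        _ = (m q)^2 * ∑ j ∈ Finset.range (q - n + 1),
              ((q.choose (n + j) : ℝ) * (q.choose j : ℝ)) := by
            rw [Finset.mul_sum]
            exact Finset.sum_congr rfl fun j _ => by simp only [hc]; ring
        _ = (m q)^2 * ((2*q).choose (q - n) : ℝ) := by
            congr 1
            have := vandN_stmt6 n q hnq
            push_cast [← this]
            norm_num
    · rw [if_neg hnq]
      refine Finset.sum_eq_zero fun j _ => ?_
      rw [if_neg (by omega)]
  rw [Finset.sum_congr rfl perq, ← Finset.sum_filter]
  congr 1
  ext q
  simp [Finset.mem_filter, Finset.mem_range, Finset.mem_Icc, Nat.lt_succ_iff, and_comm]
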